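/- arXiv:0902.1062 — 6 statements merged into one kernel-verified Lean document; each statement's English description precedes it below -/
import Mathlib

section
/- Let η : Q → Q be an endomorphism of a quasigroup Q, with Bruck decomposition Q = T×E with respect to η, where the injective homomorphism ι : E → Q is written as ι(a) = (γ(a), g(a)) with γ : E → T and g : E → E. Then g is an endomorphism of E and γ(ab) = γ(a) ∇_{g(a),g(b)} γ(b) for all a, b in E. -/
/-- A quasigroup: a set with multiplication and two-sided division operations. -/
structure QuasigroupStruct (α : Type*) where
  mul : α → α → α
  /-- left division: `ld a b = a \ b` -/
  ld : α → α → α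
  /-- right division: `rd a b = a / b` -/
  rd : α → α → α
  mul_ld : ∀ a b, mul a (ld a b) = b
  ld_mul : ∀ a b, ld a (mul a b) = b
  rd_mul : ∀ a b, mul (rd a b) b = a
  mul_rd : ∀ a b, rd (mul a b) b = a

/-- Bruck's construction: the quasigroup `Q(B) = T × E` obtained from a Bruck system,
    with multiplication `(α,a)∘(β,b) = (α ∇_{a,b} β, ab)`. -/
def bruckQG {E T : Type*} (QE : QuasigroupStruct E)
    (F : E → E → QuasigroupStruct T) : QuasigroupStruct (T × E) where
  mul p q := ((F p.2 q.2).mul p.1 q.1, QE.mul p.2 q.2)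
  ld p q := ((F p.2 (QE.ld p.2 q.2)).ld p.1 q.1, QE.ld p.2 q.2)
  rd p q := ((F (QE.rd p.2 q.2) q.2).rd p.1 q.1, QE.rd p.2 q.2)
  mul_ld p q := by
    refine Prod.ext ?_ (QE.mul_ld _ _)
    exact (F p.2 (QE.ld p.2 q.2)).mul_ld _ _
  ld_mul p q := by
    refine Prod.ext ?_ (QE.ld_mul _ _)
    have h : QE.ld p.2 (QE.mul p.2 q.2) = q.2 := QE.ld_mul _ _
    simp only [h]
    exact (F p.2 q.2).ld_mul _ _
  rd_mul p q := by
    refine Prod.ext ?_ (QE.rd_mul _ _)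
    exact (F (QE.rd p.2 q.2) q.2).rd_mul _ _
  mul_rd p q := by
    refine Prod.ext ?_ (QE.mul_rd _ _)
    have h : QE.rd (QE.mul p.2 q.2) q.2 = p.2 := QE.mul_rd _ _
    simp only [h]
    exact (F p.2 q.2).mul_rd _ _

/-- in the Bruck decomposition of Q = T × E with respect to an endomorphism
    η, with ι(a) = (γ(a), g(a)) injective, g is an endomorphism of E and
    γ(ab) = γ(a) ∇_{g(a),g(b)} γ(b). -/
theorem stmt3 {E T : Type*} [Nonempty T] (QE : QuasigroupStruct E)
    (F : E → E → QuasigroupStruct T) (η : T × E → T × E)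
    (hom : ∀ p q, η ((bruckQG QE F).mul p q) = (bruckQG QE F).mul (η p) (η q))
    (γ : E → T) (g : E → E) (hη : ∀ (α : T) (a : E), η (α, a) = (γ a, g a))
    (hinj : Function.Injective fun a => ((γ a, g a) : T × E)) :
    (∀ a b, g (QE.mul a b) = QE.mul (g a) (g b)) ∧
      (∀ a b, γ (QE.mul a b) = (F (g a) (g b)).mul (γ a) (γ b)) := by
  obtain ⟨t⟩ := ‹Nonempty T›
  have key : ∀ a b : E,
      (γ (QE.mul a b), g (QE.mul a b)) =
        ((F (g a) (g b)).mul (γ a) (γ b), QE.mul (g a) (g b)) := by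
    intro a b
    have h := hom (t, a) (t, b)
    simpa [bruckQG, hη] using h
  exact ⟨fun a b => congrArg Prod.snd (key a b),
    fun a b => congrArg Prod.fst (key a b)⟩
end

section
/- Let Q be a quasigroup whose left deviation e(x) = x\x is an endomorphism, with Bruck decomposition Q = T×E with respect to e, where e(α,a) = (γ(a), g(a)). Then g(a) = a\a (computed in E) and α ∇_{a, g(a)} γ(a) = α for all α ∈ T, a ∈ E; in particular γ(a) is a right unit element of the quasigroup (T, ∇_{a, a\a}). -/
/-- if the left deviation of Q = T × E (Bruck decomposition) is
    e(α,a) = (γ(a), g(a)), then g(a) = a\a and γ(a) is a right unit of (T, ∇_{a,a\a}). -/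
theorem stmt7 {E T : Type*} [Nonempty T] (QE : QuasigroupStruct E)
    (F : E → E → QuasigroupStruct T) (γ : E → T) (g : E → E)
    (hdev : ∀ (α : T) (a : E), (bruckQG QE F).ld (α, a) (α, a) = (γ a, g a)) :
    (∀ a, g a = QE.ld a a) ∧
      (∀ (α : T) (a : E), (F a (g a)).mul α (γ a) = α) ∧
      (∀ (α : T) (a : E), (F a (QE.ld a a)).mul α (γ a) = α) := by
  have hg : ∀ a, g a = QE.ld a a := by
    intro a
    obtain ⟨α⟩ := ‹Nonempty T›
    have := congrArg Prod.snd (hdev α a)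
    simpa [bruckQG] using this.symm
  have hγ : ∀ (α : T) (a : E), γ a = (F a (QE.ld a a)).ld α α := by
    intro α a
    have := congrArg Prod.fst (hdev α a)
    simpa [bruckQG] using this.symm
  have hmul : ∀ (α : T) (a : E), (F a (QE.ld a a)).mul α (γ a) = α := by
    intro α a
    rw [hγ α a]
    exact (F a (QE.ld a a)).mul_ld α α
  exact ⟨hg, fun α a => by rw [hg]; exact hmul α a, hmul⟩
end

section
/- Let B = (E, T, (∇_{a,b})_{a,b∈E}) be a Bruck system such that (i) for every a ∈ E the quasigroup (T, ∇_{a, a\a}) has a right unit element ε(a), and (ii) the map a ↦ (ε(a), a\a) : E → Q(B) is a homomorphism. Then the left deviation of Q(B) is an endomorphism, and it is given by e(α,a) = (ε(a), a\a). -/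
/-- if in a Bruck system each (T, ∇_{a,a\a}) has a right unit ε(a) and
    a ↦ (ε(a), a\a) is a homomorphism E → Q(B), then the left deviation of Q(B) is an
    endomorphism, given by e(α,a) = (ε(a), a\a). -/
theorem stmt8 {E T : Type*} (QE : QuasigroupStruct E)
    (F : E → E → QuasigroupStruct T) (ε : E → T)
    (hru : ∀ (a : E) (α : T), (F a (QE.ld a a)).mul α (ε a) = α)
    (hhom : ∀ a b : E,
      ((ε (QE.mul a b), QE.ld (QE.mul a b) (QE.mul a b)) : T × E) =
        (bruckQG QE F).mul (ε a, QE.ld a a) (ε b, QE.ld b b)) :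
    (∀ p q : T × E,
        (bruckQG QE F).ld ((bruckQG QE F).mul p q) ((bruckQG QE F).mul p q) =
          (bruckQG QE F).mul ((bruckQG QE F).ld p p) ((bruckQG QE F).ld q q)) ∧
      (∀ (α : T) (a : E), (bruckQG QE F).ld (α, a) (α, a) = (ε a, QE.ld a a)) := by
  have key : ∀ (α : T) (a : E), (bruckQG QE F).ld (α, a) (α, a) = (ε a, QE.ld a a) := by
    intro α a
    have h1 : (F a (QE.ld a a)).ld α α = ε a := by
      have h := (F a (QE.ld a a)).ld_mul α (ε a)
      rwa [hru a α] at h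
    simp [bruckQG, h1]
  refine ⟨?_, key⟩
  intro p q
  have hm : (bruckQG QE F).mul p q = ((F p.2 q.2).mul p.1 q.1, QE.mul p.2 q.2) := rfl
  rw [hm, key _ _, key p.1 p.2, key q.1 q.2, ← hhom]
end

section
/- Let E, T be quasigroups with a homomorphism ε : E → T such that E is a group with unit 1 and ε(1) is a right unit element of (T,∘). On Q = T×E define ∇_{a,1} by α ∇_{a,1} β = (α/ε(a)) ∘ β (right division in T) and let ∇_{a,b} for b ≠ 1 be arbitrary quasigroup operations on T. Then Q with multiplication (α,a)∘(β,b) = (α ∇_{a,b} β, ab) is a quasigroup whose left deviation is an endomorphism with group image, and e(α,a) = (ε(a), 1). -/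
/-- with E a group, ε : E → T a homomorphism into a quasigroup T whose
    right unit is ε(1), and ∇_{a,1} given by α ∇_{a,1} β = (α/ε(a))∘β (the other ∇_{a,b}
    arbitrary), the Bruck quasigroup Q = T × E has left deviation e(α,a) = (ε(a),1),
    which is an endomorphism with group (associative) image. -/
theorem stmt11 {E T : Type*} [Group E] (QT : QuasigroupStruct T) (ε : E → T)
    (hom : ∀ a b : E, ε (a * b) = QT.mul (ε a) (ε b))
    (hru : ∀ α : T, QT.mul α (ε 1) = α)
    (QE : QuasigroupStruct E)
    (hQEmul : QE.mul = fun a b : E => a * b)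
    (hQEld : QE.ld = fun a b : E => a⁻¹ * b)
    (hQErd : QE.rd = fun a b : E => a * b⁻¹)
    (F : E → E → QuasigroupStruct T)
    (hF : ∀ a : E, (F a 1).mul = fun α β => QT.mul (QT.rd α (ε a)) β) :
    (∀ (α : T) (a : E), (bruckQG QE F).ld (α, a) (α, a) = (ε a, 1)) ∧
      (∀ p q : T × E,
        (bruckQG QE F).ld ((bruckQG QE F).mul p q) ((bruckQG QE F).mul p q) =
          (bruckQG QE F).mul ((bruckQG QE F).ld p p) ((bruckQG QE F).ld q q)) ∧
      (∀ x y z : T × E,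
        x ∈ Set.range (fun w => (bruckQG QE F).ld w w) →
        y ∈ Set.range (fun w => (bruckQG QE F).ld w w) →
        z ∈ Set.range (fun w => (bruckQG QE F).ld w w) →
        (bruckQG QE F).mul ((bruckQG QE F).mul x y) z =
          (bruckQG QE F).mul x ((bruckQG QE F).mul y z)) := by 
  have hrd : ∀ a : E, QT.rd (ε a) (ε 1) = ε a := fun a => by
    have h := QT.mul_rd (ε a) (ε 1); rwa [hru] at h
  have hldF : ∀ (a : E) (α : T), (F a 1).ld α α = ε a := by
    intro a α
    have h1 : (F a 1).mul α (ε a) = α := by rw [hF]; exact QT.rd_mul α (ε a)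
    have h := (F a 1).ld_mul α (ε a)
    rwa [h1] at h
  have he : ∀ (α : T) (a : E), (bruckQG QE F).ld (α, a) (α, a) = (ε a, 1) := by
    intro α a
    show ((F a (QE.ld a a)).ld α α, QE.ld a a) = (ε a, 1)
    have h1 : QE.ld a a = 1 := by rw [hQEld]; simp
    rw [h1, hldF]
  have hmul : ∀ a b : E, (bruckQG QE F).mul (ε a, 1) (ε b, 1) = (ε (a*b), 1) := by
    intro a b
    show ((F 1 1).mul (ε a) (ε b), QE.mul 1 1) = (ε (a*b), 1)
    rw [hF, hQEmul]
    simp only [hrd, one_mul]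
    rw [hom]
  refine ⟨he, ?_, ?_⟩
  · intro p q
    obtain ⟨α, a⟩ := p; obtain ⟨β, b⟩ := q
    have hm : (bruckQG QE F).mul (α, a) (β, b) =
        ((F a b).mul α β, QE.mul a b) := rfl
    rw [hm, he, he, he, hmul, hQEmul]
  · rintro x y z ⟨⟨α,a⟩, hx⟩ ⟨⟨β,b⟩, hy⟩ ⟨⟨γ,c⟩, hz⟩
    simp only at hx hy hz
    rw [he] at hx hy hz
    subst hx; subst hy; subst hz
    rw [hmul, hmul, hmul, hmul, mul_assoc]
end

section
/- Every LF-quasigroup Q satisfies: the left deviation e(x) = x\x is an endomorphism of Q, i.e., (xy)\(xy) = (x\x)·(y\y) for all x,y. -/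
/-- in every LF-quasigroup (x·(yz) = (xy)·((x\x)·z)) the left deviation
    e(x) = x\x is an endomorphism: (xy)\(xy) = (x\x)·(y\y). -/
theorem stmt12 {Q : Type*} (G : QuasigroupStruct Q)
    (LF : ∀ x y z, G.mul x (G.mul y z) = G.mul (G.mul x y) (G.mul (G.ld x x) z)) :
    ∀ x y, G.ld (G.mul x y) (G.mul x y) = G.mul (G.ld x x) (G.ld y y) := by
  intro x y
  have h : G.mul x y = G.mul (G.mul x y) (G.mul (G.ld x x) (G.ld y y)) := by
    have := LF x y (G.ld y y)
    rwa [G.mul_ld] at this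
  calc G.ld (G.mul x y) (G.mul x y)
      = G.ld (G.mul x y) (G.mul (G.mul x y) (G.mul (G.ld x x) (G.ld y y))) := by rw [← h]
    _ = G.mul (G.ld x x) (G.ld y y) := G.ld_mul _ _
end

section
/- Let E and T be groups and ε : E → T a group homomorphism, and let Q = T×E with multiplication (α,a)∘(β,b) = (α·ε(a)⁻¹·β, ab). Then Q is an LF-quasigroup, i.e., it satisfies x∘(y∘z) = (x∘y)∘(e(x)∘z) where e(x) = x\x, and explicitly e(α,a) = (ε(a),1). -/
/-- Q = T × E with (α,a)∘(β,b) = (α·ε(a)⁻¹·β, ab) is an LF-quasigroup: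
    its left division is (α,a)\(β,b) = (ε(a)·α⁻¹·β, a⁻¹b), its left deviation is
    e(α,a) = (ε(a),1), and x∘(y∘z) = (x∘y)∘(e(x)∘z) holds. -/
theorem stmt14 {E T : Type*} [Group E] [Group T] (ε : E →* T)
    (m ld : T × E → T × E → T × E)
    (hm : m = fun p q => (p.1 * (ε p.2)⁻¹ * q.1, p.2 * q.2))
    (hld : ld = fun p q => (ε p.2 * p.1⁻¹ * q.1, p.2⁻¹ * q.2)) :
    (∀ x y, m x (ld x y) = y) ∧ (∀ x y, ld x (m x y) = y) ∧
      (∀ x y z, m x (m y z) = m (m x y) (m (ld x x) z)) ∧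
      (∀ (α : T) (a : E), ld (α, a) (α, a) = ((ε a : T), (1 : E))) := by
  subst hm hld
  refine ⟨?_, ?_, ?_, ?_⟩ <;> intros <;>
    simp [Prod.ext_iff, map_mul, map_inv, mul_assoc]
end
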